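/- Define, for a partition σ = (n_1,...,n_ℓ) of n into distinct parts, m(σ) as the maximal index m such that n_j = n_{j-1} - 1 for all 2 ≤ j ≤ m (with m(σ)=1 when ℓ=1 or n_2 < n_1 - 1). Define the linear map δ on partitions with distinct parts by: if m(σ) < ℓ then δ(σ) = 0 when m(σ) ≥ n_ℓ and δ(σ) = (n_1-1,...,n_{m(σ)}-1, n_{m(σ)+1},...,n_ℓ, m(σ)) when m(σ) < n_ℓ; if m(σ) = ℓ then δ(σ) = 0 when m(σ) ≥ n_ℓ - 1 and δ(σ) = (n_1-1,...,n_ℓ-1, m(σ)) when m(σ) < n_ℓ - 1. Then δ maps partitions of n with ℓ distinct parts to partitions of n with ℓ+1 distinct parts (or 0), and δ ∘ δ = 0. -/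

import Mathlib

/-- A partition of `n` with distinct parts: a strictly decreasing list of positive
integers summing to `n`. -/
def IsDistinctPartition (n : ℕ) (σ : List ℕ) : Prop :=
  σ.Pairwise (· > ·) ∧ (∀ x ∈ σ, 0 < x) ∧ σ.sum = n

/-- `mval σ` is `m(σ)`: the maximal `m` such that `n_j = n_{j-1} - 1` for all
`2 ≤ j ≤ m`. -/
def mval : List ℕ → ℕ
  | [] => 0
  | [_] => 1
  | a :: b :: t => if b = a - 1 then mval (b :: t) + 1 else 1

namespace DeltaAux

def consec (a k : ℕ) : List ℕ := (List.range k).map (a - ·)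

@[simp] lemma consec_zero (a : ℕ) : consec a 0 = [] := rfl

lemma consec_succ (a k : ℕ) : consec a (k+1) = a :: consec (a-1) k := by
  simp only [consec, List.range_succ_eq_map, List.map_cons, List.map_map, Nat.sub_zero]
  congr 1
  apply List.map_congr_left
  intro i _
  simp [Function.comp]
  omega

lemma consec_concat (a k : ℕ) : consec a (k+1) = consec a k ++ [a - k] := by
  simp [consec, List.range_succ]

@[simp] lemma consec_length (a k : ℕ) : (consec a k).length = k := by
  simp [consec]

lemma mem_consec {x a k : ℕ} : x ∈ consec a k ↔ ∃ i, i < k ∧ x = a - i := by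
  simp [consec, eq_comm]

lemma consec_map_pred (a k : ℕ) : (consec a k).map (· - 1) = consec (a-1) k := by
  simp only [consec, List.map_map]
  apply List.map_congr_left
  intro i _
  simp [Function.comp]
  omega

lemma consec_sorted {a k : ℕ} (h : k ≤ a + 1) : (consec a k).Pairwise (· > ·) := by
  unfold consec
  rw [List.pairwise_map]
  apply List.Pairwise.imp_of_mem (R := (· < ·)) ?_ (List.pairwise_lt_range (n := k))
  intro i j hi hj hij
  simp only [List.mem_range] at hi hj
  simp only [gt_iff_lt]
  omega

lemma mval_pos {σ : List ℕ} (h : σ ≠ []) : 1 ≤ mval σ := by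
  match σ with
  | [x] => simp [mval]
  | a :: b :: t =>
    simp only [mval]
    split <;> omega

lemma mval_le : ∀ σ : List ℕ, mval σ ≤ σ.length
  | [] => by simp [mval]
  | [x] => by simp [mval]
  | a :: b :: t => by
    simp only [mval]
    have := mval_le (b :: t)
    split <;> simp_all <;> omega

lemma take_mval : ∀ σ : List ℕ, σ.take (mval σ) = consec σ.head! (mval σ)
  | [] => by simp [mval]
  | [x] => by simp [mval, consec, List.range_succ]
  | a :: b :: t => by
    simp only [mval]
    split
    · rename_i hb
      rw [List.take_succ_cons]
      have ih := take_mval (b :: t)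
      simp only [List.head!_cons] at ih ⊢
      rw [ih, consec_succ, hb]
    · simp [consec, List.range_succ]

lemma drop_mval_head : ∀ (σ : List ℕ) (b : ℕ) (t' : List ℕ),
    σ.drop (mval σ) = b :: t' → b ≠ σ.head! - mval σ
  | [] => by simp [mval]
  | [x] => by simp [mval]
  | a :: b :: t => by
    intro c t' h
    simp only [mval] at h ⊢
    split at h
    · rename_i hb
      subst hb
      rw [List.drop_succ_cons] at h
      have ih := drop_mval_head ((a-1) :: t) c t' h
      simp only [List.head!_cons] at ih ⊢
      simp only [if_true]
      omega
    · rename_i hb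
      simp only [List.drop_succ_cons, List.drop_zero] at h
      simp only [if_neg hb]
      rw [List.head!_cons]
      cases h
      exact hb

lemma mval_consec_ge : ∀ (k a : ℕ) (L : List ℕ), L ≠ [] → k ≤ mval (consec a k ++ L)
  | 0, a, L, hL => Nat.zero_le _
  | k+1, a, L, hL => by
    rw [consec_succ, List.cons_append]
    match k, L with
    | 0, c :: L' =>
      simp only [consec_zero, List.nil_append]
      exact mval_pos (by simp)
    | j+1, L =>
      have ih := mval_consec_ge (j+1) (a-1) L hL
      rw [consec_succ, List.cons_append] at ih ⊢
      show j + 1 + 1 ≤ mval (a :: (a-1) :: (consec (a-1-1) j ++ L))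
      have step : mval (a :: (a-1) :: (consec (a-1-1) j ++ L))
          = mval ((a-1) :: (consec (a-1-1) j ++ L)) + 1 := by simp [mval]
      omega

lemma sum_map_pred {l : List ℕ} (h : ∀ x ∈ l, 0 < x) :
    (l.map (· - 1)).sum + l.length = l.sum := by
  induction l with
  | nil => simp
  | cons a t ih =>
    simp only [List.map_cons, List.sum_cons, List.length_cons]
    have := h a (by simp)
    have := ih (fun x hx => h x (by simp [hx]))
    omega

lemma getLast_le_of_sorted : ∀ {l : List ℕ}, l.Pairwise (· > ·) → ∀ y ∈ l,
    ∀ h : l ≠ [], l.getLast h ≤ y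
  | [], _, y, hy, h => absurd rfl h
  | a :: t, hs, y, hy, h => by
    rcases List.mem_cons.mp hy with rfl | hyt
    · rcases eq_or_ne t [] with rfl | ht
      · simp
      · rw [List.getLast_cons ht]
        have hmem : t.getLast ht ∈ t := List.getLast_mem ht
        have := (List.pairwise_cons.mp hs).1 _ hmem
        omega
    · have ht : t ≠ [] := by rintro rfl; simp at hyt
      rw [List.getLast_cons ht]
      exact getLast_le_of_sorted (List.pairwise_cons.mp hs).2 y hyt ht

lemma getLast!_concat (l : List ℕ) (x : ℕ) : (l ++ [x]).getLast! = x :=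
  List.getLast!_of_getLast? List.getLast?_concat

lemma getLast!_eq_getLast (l : List ℕ) (h : l ≠ []) : l.getLast! = l.getLast h :=
  List.getLast!_of_getLast? (List.getLast?_eq_getLast h)

end DeltaAux

/-- The coboundary map `δ`: if `m(σ) < ℓ` then `δσ = 0` when `m(σ) ≥ n_ℓ`, and
`δσ = (n_1-1, …, n_{m(σ)}-1, n_{m(σ)+1}, …, n_ℓ, m(σ))` when `m(σ) < n_ℓ`;
if `m(σ) = ℓ` then `δσ = 0` when `m(σ) ≥ n_ℓ - 1` and
`δσ = (n_1-1, …, n_ℓ-1, m(σ))` when `m(σ) < n_ℓ - 1`.  The zero vector is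
represented by `none`. -/
def deltaS (σ : List ℕ) : Option (List ℕ) :=
  if σ = [] then none
  else
    let m := mval σ
    if (m < σ.length ∧ m < σ.getLast! ) ∨ (m = σ.length ∧ m < σ.getLast! - 1) then
      some ((σ.take m).map (· - 1) ++ σ.drop m ++ [m])
    else none

/-- The adjoint map `δ*`: when (`m(σ) < ℓ` and `m(σ) ≥ n_ℓ`) or (`m(σ) = ℓ` and
`m(σ) > n_ℓ`), `δ*σ = (n_1+1, …, n_{n_ℓ}+1, n_{n_ℓ+1}, …, n_{ℓ-1})` (add 1 to the
first `n_ℓ` parts and delete the last part); otherwise `δ*σ = 0` (`none`). -/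
def deltaStarS (σ : List ℕ) : Option (List ℕ) :=
  if σ = [] then none
  else
    let m := mval σ
    let nl := σ.getLast!
    if (m < σ.length ∧ nl ≤ m) ∨ (m = σ.length ∧ nl < m) then
      some ((σ.dropLast.take nl).map (· + 1) ++ σ.dropLast.drop nl)
    else none

open DeltaAux in
theorem deltaS_wellDefined_and_sq_zero (n : ℕ) (σ : List ℕ)
    (hσ : IsDistinctPartition n σ) :
    (∀ τ, deltaS σ = some τ →
      IsDistinctPartition n τ ∧ τ.length = σ.length + 1) ∧
    (∀ τ, deltaS σ = some τ → deltaS τ = none) := by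
  obtain ⟨hsort, hpos, hsum⟩ := hσ
  suffices main : ∀ τ, deltaS σ = some τ →
      IsDistinctPartition n τ ∧ τ.length = σ.length + 1 ∧ deltaS τ = none by
    exact ⟨fun τ h => ⟨(main τ h).1, (main τ h).2.1⟩, fun τ h => (main τ h).2.2⟩
  intro τ hτ
  have hσne : σ ≠ [] := by rintro rfl; simp [deltaS] at hτ
  simp only [deltaS, if_neg hσne] at hτ
  split at hτ
  case isFalse => exact absurd hτ (by simp)
  case isTrue hC =>
  rw [Option.some_inj] at hτ
  set m := mval σ with hm
  set a := σ.head! with ha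
  have hm1 : 1 ≤ m := mval_pos hσne
  have hmle : m ≤ σ.length := mval_le σ
  have htake : σ.take m = consec a m := take_mval σ
  have hmem : a - (m-1) ∈ consec a m := mem_consec.mpr ⟨m-1, by omega, rfl⟩
  have ham : m ≤ a := by
    have h1 : a - (m-1) ∈ σ := List.take_subset m σ (htake ▸ hmem)
    have := hpos _ h1
    omega
  have hdec : σ = consec a m ++ σ.drop m := by
    conv_lhs => rw [← List.take_append_drop m σ]
    rw [htake]
  have hsp : (consec a m ++ σ.drop m).Pairwise (· > ·) := hdec ▸ hsort
  obtain ⟨hpw1, hpw2, hcross⟩ := List.pairwise_append.mp hsp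
  -- key facts
  have key : (∀ y ∈ σ.drop m, m < y ∧ y < a - m) ∧ m < a - m := by
    rcases hC with ⟨hml, hnl⟩ | ⟨hml, hnl⟩
    · -- m < length : drop nonempty
      have hdne : σ.drop m ≠ [] := by
        intro h
        have : (σ.drop m).length = σ.length - m := List.length_drop
        rw [h] at this
        simp at this
        omega
      obtain ⟨b, t', hd⟩ := List.exists_cons_of_ne_nil hdne
      have hbne : b ≠ a - m := drop_mval_head σ b t' hd
      have hbtop : a - (m-1) > b := hcross _ hmem b (by rw [hd]; exact List.mem_cons_self)
      have hblt : b < a - m := by omega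
      have hgl : σ.getLast! = (σ.drop m).getLast hdne := by
        apply List.getLast!_of_getLast?
        conv_lhs => rw [hdec]
        rw [List.getLast?_append, List.getLast?_eq_getLast hdne]
        rfl
      rw [hgl] at hnl
      have hlastmem : (σ.drop m).getLast hdne ∈ σ.drop m := List.getLast_mem hdne
      have hylast : ∀ y ∈ σ.drop m, (σ.drop m).getLast hdne ≤ y :=
        fun y hy => getLast_le_of_sorted hpw2 y hy hdne
      have hyb : ∀ y ∈ σ.drop m, y ≤ b := by
        intro y hy
        rw [hd] at hy
        rcases List.mem_cons.mp hy with rfl | hyt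
        · exact le_refl y
        · have := (List.pairwise_cons.mp (hd ▸ hpw2)).1 y hyt
          omega
      have hbmem : b ∈ σ.drop m := by rw [hd]; exact List.mem_cons_self
      have hmb : m < b := lt_of_lt_of_le hnl (hylast b hbmem)
      refine ⟨fun y hy => ⟨?_, ?_⟩, by omega⟩
      · exact lt_of_lt_of_le hnl (hylast y hy)
      · have := hyb y hy; omega
    · -- m = length : drop empty
      have hde : σ.drop m = [] := by rw [hml]; exact List.drop_length
      have hσc : σ = consec a m := by rw [hdec, hde, List.append_nil]
      have hgl : σ.getLast! = a - (m-1) := by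
        rw [hσc, show m = (m-1) + 1 by omega, consec_concat, getLast!_concat]
        omega
      rw [hgl] at hnl
      constructor
      · intro y hy; rw [hde] at hy; simp at hy
      · omega
  obtain ⟨KA, hamm⟩ := key
  have hτeq : τ = consec (a-1) m ++ σ.drop m ++ [m] := by
    rw [← hτ, htake, consec_map_pred]
  have hPge : ∀ x ∈ consec (a-1) m, a - m ≤ x := by
    intro x hx
    obtain ⟨i, hi, rfl⟩ := mem_consec.mp hx
    omega
  -- sortedness of τ
  have hτsort : τ.Pairwise (· > ·) := by
    rw [hτeq]
    apply List.pairwise_append.mpr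
    refine ⟨?_, by simp, ?_⟩
    · apply List.pairwise_append.mpr
      refine ⟨consec_sorted (by omega), hpw2, ?_⟩
      intro x hx y hy
      have := hPge x hx
      have := (KA y hy).2
      simp only [gt_iff_lt]
      omega
    · intro z hz w hw
      simp only [List.mem_singleton] at hw
      subst hw
      rcases List.mem_append.mp hz with hz | hz
      · have := hPge z hz; simp only [gt_iff_lt]; omega
      · exact (KA z hz).1
  -- positivity
  have hτpos : ∀ x ∈ τ, 0 < x := by
    intro x hx
    rw [hτeq] at hx
    rcases List.mem_append.mp hx with hx | hx
    · rcases List.mem_append.mp hx with hx | hx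
      · have := hPge x hx; omega
      · have := (KA x hx).1; omega
    · simp at hx; omega
  -- sum
  have hlt : (σ.take m).length = m := by rw [htake, consec_length]
  have hpsum : ((σ.take m).map (· - 1)).sum + (σ.take m).length = (σ.take m).sum :=
    sum_map_pred (fun x hx => hpos x (List.take_subset _ _ hx))
  have hts : (σ.take m).sum + (σ.drop m).sum = n := by
    rw [← List.sum_append, List.take_append_drop, hsum]
  have hτsum : τ.sum = n := by
    rw [← hτ, List.sum_append, List.sum_append, List.sum_cons, List.sum_nil]
    omega
  -- length
  have hτlen : τ.length = σ.length + 1 := by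
    rw [← hτ]
    simp only [List.length_append, List.length_map, List.length_take, List.length_drop,
      List.length_singleton]
    omega
  refine ⟨⟨hτsort, hτpos, hτsum⟩, hτlen, ?_⟩
  -- delta τ = none
  have hτne : τ ≠ [] := by rw [hτeq]; simp
  have hτlast : τ.getLast! = m := by rw [hτeq]; exact getLast!_concat _ m
  have hmvτ : m ≤ mval τ := by
    rw [hτeq, List.append_assoc]
    exact mval_consec_ge m (a-1) (σ.drop m ++ [m]) (by simp)
  simp only [deltaS, if_neg hτne, hτlast, hτlen]
  rw [if_neg (by omega)]
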